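/- (Step 3 of the proof of the main theorem, general form.) Let F₁ and F₂ be families of subsets of a set X whose VC dimensions are at most d₁ and d₂ respectively. Then the family F₁ ∪ F₂ has VC dimension at most d₁ + d₂ + 1; that is, F₁ ∪ F₂ shatters no subset of X of cardinality d₁ + d₂ + 2. -/

import Mathlib

/-- A family `F` of subsets of `X` shatters a finite set `A` if every subset of `A`
is cut out by some member of `F`. -/
def Shatters {X : Type*} (F : Set (Set X)) (A : Finset X) : Prop :=
  ∀ B : Finset X, B ⊆ A → ∃ f ∈ F, (B : Set X) = (A : Set X) ∩ f

open Finset in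
private lemma binom_sum_lt (d₁ d₂ : ℕ) :
    (∑ i ∈ range (d₁ + 1), (d₁ + d₂ + 2).choose i) +
      (∑ i ∈ range (d₂ + 1), (d₁ + d₂ + 2).choose i) < 2 ^ (d₁ + d₂ + 2) := by
  set n := d₁ + d₂ + 2 with hn
  have hsymm : (∑ i ∈ range (d₂ + 1), n.choose i)
      = ∑ j ∈ Ico (d₁ + 2) (n + 1), n.choose j := by
    refine Finset.sum_nbij' (fun i => n - i) (fun j => n - j) ?_ ?_ ?_ ?_ ?_
    · intro i hi
      simp only [mem_range] at hi
      simp only [mem_Ico]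
      omega
    · intro j hj
      simp only [mem_Ico] at hj
      simp only [mem_range]
      omega
    · intro i hi; simp only [mem_range] at hi; omega
    · intro j hj; simp only [mem_Ico] at hj; omega
    · intro i hi
      simp only [mem_range] at hi
      rw [Nat.choose_symm (by omega)]
  have hsplit : 2 ^ n = (∑ i ∈ range (d₁ + 1), n.choose i) + n.choose (d₁ + 1)
      + ∑ j ∈ Ico (d₁ + 2) (n + 1), n.choose j := by
    rw [← Nat.sum_range_choose n, range_eq_Ico,
      ← Finset.sum_Ico_consecutive _ (by omega : 0 ≤ d₁ + 1) (by omega : d₁ + 1 ≤ n + 1),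
      Finset.sum_eq_sum_Ico_succ_bot (by omega : d₁ + 1 < n + 1)]
    simp only [show d₁ + 1 + 1 = d₁ + 2 by omega, range_eq_Ico]
    ring
  have hpos : 0 < n.choose (d₁ + 1) := Nat.choose_pos (by omega)
  omega

/-- Step 3 of the proof of the main theorem (general form): if `F₁` and `F₂` have VC
dimensions at most `d₁` and `d₂`, then `F₁ ∪ F₂` has VC dimension at most
`d₁ + d₂ + 1`, i.e. it shatters no set of cardinality `d₁ + d₂ + 2`. -/
theorem vc_dim_union_le {X : Type*} (F₁ F₂ : Set (Set X)) (d₁ d₂ : ℕ)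
    (h₁ : ∀ A : Finset X, A.card = d₁ + 1 → ¬ Shatters F₁ A)
    (h₂ : ∀ A : Finset X, A.card = d₂ + 1 → ¬ Shatters F₂ A) :
    ∀ A : Finset X, A.card = d₁ + d₂ + 2 → ¬ Shatters (F₁ ∪ F₂) A := by
  classical
  intro A hA hsh
  -- trace families on A
  set 𝒜₁ : Finset (Finset X) :=
    A.powerset.filter (fun B => ∃ f ∈ F₁, (B : Set X) = (A : Set X) ∩ f) with h𝒜₁
  set 𝒜₂ : Finset (Finset X) :=
    A.powerset.filter (fun B => ∃ f ∈ F₂, (B : Set X) = (A : Set X) ∩ f) with h𝒜₂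
  -- every subset of A is traced
  have hcover : A.powerset ⊆ 𝒜₁ ∪ 𝒜₂ := by
    intro B hB
    rw [Finset.mem_powerset] at hB
    obtain ⟨f, hf, hBf⟩ := hsh B hB
    rcases hf with hf | hf
    · exact Finset.mem_union_left _ (Finset.mem_filter.2 ⟨Finset.mem_powerset.2 hB, f, hf, hBf⟩)
    · exact Finset.mem_union_right _ (Finset.mem_filter.2 ⟨Finset.mem_powerset.2 hB, f, hf, hBf⟩)
  -- key bound on traces
  have key : ∀ (F : Set (Set X)) (d : ℕ),
      (∀ C : Finset X, C.card = d + 1 → ¬ Shatters F C) →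
      ∀ 𝒜 : Finset (Finset X),
        𝒜 = A.powerset.filter (fun B : Finset X => ((∃ f ∈ F, (B : Set X) = (A : Set X) ∩ f) : Prop)) →
        𝒜.card ≤ ∑ i ∈ Finset.range (d + 1), (d₁ + d₂ + 2).choose i := by
    intro F d hF 𝒜 h𝒜
    have hshat : 𝒜.shatterer ⊆ (Finset.range (d + 1)).biUnion (fun i => A.powersetCard i) := by
      intro s hs
      rw [Finset.mem_shatterer] at hs
      have hsA : s ⊆ A := by
        obtain ⟨u, hu, hsu⟩ := hs.exists_superset
        rw [h𝒜, Finset.mem_filter, Finset.mem_powerset] at hu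
        exact hsu.trans hu.1
      have hcard : s.card ≤ d := by
        by_contra hc
        push_neg at hc
        obtain ⟨s', hs's, hs'card⟩ := Finset.exists_subset_card_eq (by omega : d + 1 ≤ s.card)
        refine hF s' hs'card ?_
        intro B hB
        obtain ⟨u, hu, hsu⟩ := (hs.mono_right hs's) hB
        rw [h𝒜, Finset.mem_filter] at hu
        obtain ⟨f, hf, huf⟩ := hu.2
        refine ⟨f, hf, ?_⟩
        have : (B : Set X) = (s' : Set X) ∩ (u : Set X) := by
          rw [← hsu]; push_cast; rfl
        have h1 : (s' : Set X) ∩ (A : Set X) = (s' : Set X) :=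
          Set.inter_eq_left.2 (by exact_mod_cast Finset.coe_subset.2 (hs's.trans hsA))
        rw [this, huf, ← Set.inter_assoc, h1]
      simp only [Finset.mem_biUnion, Finset.mem_range, Finset.mem_powersetCard]
      exact ⟨s.card, by omega, hsA, rfl⟩
    calc 𝒜.card ≤ 𝒜.shatterer.card := Finset.card_le_card_shatterer 𝒜
      _ ≤ ((Finset.range (d + 1)).biUnion (fun i => A.powersetCard i)).card :=
          Finset.card_le_card hshat
      _ ≤ ∑ i ∈ Finset.range (d + 1), (A.powersetCard i).card := Finset.card_biUnion_le
      _ = ∑ i ∈ Finset.range (d + 1), (d₁ + d₂ + 2).choose i := by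
          refine Finset.sum_congr rfl fun i _ => ?_
          rw [Finset.card_powersetCard, hA]
  have hk₁ := key F₁ d₁ h₁ 𝒜₁ h𝒜₁
  have hk₂ := key F₂ d₂ h₂ 𝒜₂ h𝒜₂
  have hpow : 2 ^ (d₁ + d₂ + 2) ≤ 𝒜₁.card + 𝒜₂.card := by
    calc 2 ^ (d₁ + d₂ + 2) = A.powerset.card := by rw [Finset.card_powerset, hA]
      _ ≤ (𝒜₁ ∪ 𝒜₂).card := Finset.card_le_card hcover
      _ ≤ 𝒜₁.card + 𝒜₂.card := Finset.card_union_le _ _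
  have := binom_sum_lt d₁ d₂
  omega
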